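/- Let x ∈ ℝ, y, w > 0, set z = x + iy, and let m = [[1, x],[0, 1]]·[[y^{1/2}, 0],[0, y^{−1/2}]]·[[w, 0],[0, w]] ∈ GL₂(ℝ). Let a, b, c, d ∈ ℝ, set ω = −(a, b/3, c/3, d) and p(t) = at³ + bt² + ct + d. Then: (i) m·(u − iv)³ = w·y^{−3/2}·(u − zv)³; (ii) ⟨ω, m·(−v + iu)³⟩ = −i·w·y^{−3/2}·p(z̄); (iii) ⟨ω, m·(−v − iu)³⟩ = i·w·y^{−3/2}·p(z); (iv) ⟨ω, m·3(−v − iu)²(−v + iu)⟩ = −w·y^{−3/2}·(2y·p'(z) + 3i·p(z)); (v) ⟨ω, m·3(−v + iu)²(−v − iu)⟩ = −w·y^{−3/2}·(2y·p'(z̄) − 3i·p(z̄)). -/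

import Mathlib

set_option autoImplicit false

/-!
Identities for the action of `m = [[1,x],[0,1]]·[[y^{1/2},0],[0,y^{−1/2}]]·[[w,0],[0,w]]`
on complex binary cubics, and the symplectic pairings `⟨ω, m·f⟩` for
`ω = −(a, b/3, c/3, d)` and `p(t) = at³ + bt² + ct + d`.

`GL₂` acts on binary cubics by `(m·f)(u, v) = det(m)²·f(m⁻¹(u,v)ᵀ)`.  A binary cubic
`αu³ + βu²v + γuv² + δv³` is identified with the quadruple `(α, β/3, γ/3, δ)`, and
`⟨(a,b/3,c/3,d), (a',b'/3,c'/3,d')⟩ = ad' − (1/3)bc' + (1/3)cb' − da'`.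
-/

noncomputable section

/-- The action of `m ∈ GL₂(ℝ)` on binary cubics (as functions of `(u, v) ∈ ℂ²`):
`(m·f)(u, v) = det(m)² · f(m⁻¹(u, v)ᵀ)`. -/
def actGL2 (m : Matrix (Fin 2) (Fin 2) ℝ) (f : ℂ → ℂ → ℂ) : ℂ → ℂ → ℂ := fun u v =>
  ((m.det : ℂ)) ^ 2 *
    f ((m⁻¹ 0 0 : ℝ) * u + (m⁻¹ 0 1 : ℝ) * v) ((m⁻¹ 1 0 : ℝ) * u + (m⁻¹ 1 1 : ℝ) * v)

/-- The binary cubic with coefficient vector `q = (q₀, q₁, q₂, q₃)`: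
`q₀u³ + q₁u²v + q₂uv² + q₃v³`. -/
def cubicEval (q : Fin 4 → ℂ) (u v : ℂ) : ℂ :=
  q 0 * u ^ 3 + q 1 * u ^ 2 * v + q 2 * u * v ^ 2 + q 3 * v ^ 3

/-- The symplectic pairing of two binary cubics with coefficient vectors `(a,b,c,d)`
and `(a',b',c',d')` (i.e. of the quadruples `(a,b/3,c/3,d)` and `(a',b'/3,c'/3,d')`):
`ad' − (1/3)bc' + (1/3)cb' − da'`. -/
def cubicPair (q q' : Fin 4 → ℂ) : ℂ :=
  q 0 * q' 3 - (1 / 3) * q 1 * q' 2 + (1 / 3) * q 2 * q' 1 - q 3 * q' 0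

set_option maxHeartbeats 1000000 in
/-- Let `x ∈ ℝ`, `y, w > 0`, `z = x + iy`,
`m = [[1,x],[0,1]]·[[y^{1/2},0],[0,y^{−1/2}]]·[[w,0],[0,w]]`, `ω = −(a,b/3,c/3,d)`
and `p(t) = at³ + bt² + ct + d`.  Then:
(i) `m·(u − iv)³ = w·y^{−3/2}·(u − zv)³`;
(ii) `⟨ω, m·(−v + iu)³⟩ = −i·w·y^{−3/2}·p(z̄)`;
(iii) `⟨ω, m·(−v − iu)³⟩ = i·w·y^{−3/2}·p(z)`;
(iv) `⟨ω, m·3(−v − iu)²(−v + iu)⟩ = −w·y^{−3/2}·(2y·p'(z) + 3i·p(z))`;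
(v) `⟨ω, m·3(−v + iu)²(−v − iu)⟩ = −w·y^{−3/2}·(2y·p'(z̄) − 3i·p(z̄))`. -/
theorem cubic_action_pairings (x y w : ℝ) (hy : 0 < y) (hw : 0 < w) (a b c d : ℝ)
    (z : ℂ) (hz : z = (x : ℂ) + Complex.I * (y : ℂ))
    (m : Matrix (Fin 2) (Fin 2) ℝ)
    (hm : m = !![(1 : ℝ), x; 0, 1] * !![Real.sqrt y, 0; 0, (Real.sqrt y)⁻¹] *
      !![w, 0; 0, w])
    (p : ℂ → ℂ) (hp : p = fun t => (a : ℂ) * t ^ 3 + (b : ℂ) * t ^ 2 + (c : ℂ) * t + (d : ℂ))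
    (ω : Fin 4 → ℂ) (hω : ω = ![-(a : ℂ), -(b : ℂ), -(c : ℂ), -(d : ℂ)]) :
    (∀ u v : ℂ, actGL2 m (fun u v => (u - Complex.I * v) ^ 3) u v
        = (w : ℂ) * ((y ^ (-(3 : ℝ) / 2) : ℝ) : ℂ) * (u - z * v) ^ 3) ∧
    (∀ q : Fin 4 → ℂ,
      (∀ u v : ℂ, cubicEval q u v = actGL2 m (fun u v => (-v + Complex.I * u) ^ 3) u v) →
      cubicPair ω q
        = -Complex.I * (w : ℂ) * ((y ^ (-(3 : ℝ) / 2) : ℝ) : ℂ) * p ((starRingEnd ℂ) z)) ∧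
    (∀ q : Fin 4 → ℂ,
      (∀ u v : ℂ, cubicEval q u v = actGL2 m (fun u v => (-v - Complex.I * u) ^ 3) u v) →
      cubicPair ω q = Complex.I * (w : ℂ) * ((y ^ (-(3 : ℝ) / 2) : ℝ) : ℂ) * p z) ∧
    (∀ q : Fin 4 → ℂ,
      (∀ u v : ℂ, cubicEval q u v
          = actGL2 m (fun u v => 3 * (-v - Complex.I * u) ^ 2 * (-v + Complex.I * u)) u v) →
      cubicPair ω q = -((w : ℂ) * ((y ^ (-(3 : ℝ) / 2) : ℝ) : ℂ) *
        (2 * (y : ℂ) * deriv p z + 3 * Complex.I * p z))) ∧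
    (∀ q : Fin 4 → ℂ,
      (∀ u v : ℂ, cubicEval q u v
          = actGL2 m (fun u v => 3 * (-v + Complex.I * u) ^ 2 * (-v - Complex.I * u)) u v) →
      cubicPair ω q = -((w : ℂ) * ((y ^ (-(3 : ℝ) / 2) : ℝ) : ℂ) *
        (2 * (y : ℂ) * deriv p ((starRingEnd ℂ) z) - 3 * Complex.I * p ((starRingEnd ℂ) z)))) := by
  have hYpos : 0 < Real.sqrt y := Real.sqrt_pos.mpr hy
  set Y : ℝ := Real.sqrt y with hYdef
  have hYne : Y ≠ 0 := ne_of_gt hYpos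
  have hwne : w ≠ 0 := ne_of_gt hw
  have hYneC : (Y : ℂ) ≠ 0 := by exact_mod_cast hYne
  have hwneC : (w : ℂ) ≠ 0 := by exact_mod_cast hwne
  have hy2R : Y ^ 2 = y := Real.sq_sqrt hy.le
  have hy2 : (y : ℂ) = (Y : ℂ) ^ 2 := by exact_mod_cast hy2R.symm
  have hCR : y ^ (-(3:ℝ)/2) = (Y ^ 3)⁻¹ := by
    rw [hYdef, show (-(3:ℝ)/2) = (1/2) * (-3) by norm_num, Real.rpow_mul hy.le,
      Real.rpow_neg (by positivity), ← Real.sqrt_eq_rpow]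
    rw [show (3:ℝ) = ((3:ℕ):ℝ) by norm_num, Real.rpow_natCast]
  have hCK : ((y ^ (-(3:ℝ)/2) : ℝ) : ℂ) = ((Y : ℂ) ^ 3)⁻¹ := by rw [hCR]; push_cast; ring
  have hmE : m = !![Y * w, x * Y⁻¹ * w; 0, Y⁻¹ * w] := by
    rw [hm]; ext i j; fin_cases i <;> fin_cases j <;>
      simp [Matrix.mul_apply, Fin.sum_univ_two]
  have hdetR : m.det = w ^ 2 := by
    rw [hmE, Matrix.det_fin_two_of]; field_simp; ring
  have hinvE : m⁻¹ = !![(Y * w)⁻¹, -(x * (Y * w)⁻¹); 0, Y / w] := by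
    apply Matrix.inv_eq_right_inv
    rw [hmE]; ext i j; fin_cases i <;> fin_cases j <;>
      simp [Matrix.mul_apply, Fin.sum_univ_two] <;> field_simp <;> ring
  have hact : ∀ (f : ℂ → ℂ → ℂ) (u v : ℂ), actGL2 m f u v
      = (w : ℂ) ^ 4 * f (((Y : ℂ) * w)⁻¹ * u + (-((x : ℂ) * ((Y : ℂ) * w)⁻¹)) * v)
        (((Y : ℂ) / w) * v) := by
    intro f u v
    rw [actGL2, hinvE, hdetR]
    simp only [Matrix.of_apply, Matrix.cons_val', Matrix.cons_val_zero, Matrix.cons_val_one,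
      Matrix.head_cons, Matrix.empty_val', Matrix.cons_val_fin_one, Matrix.head_fin_const]
    congr 1
    · push_cast; ring
    · congr 1 <;> push_cast <;> ring
  have hI3 : Complex.I ^ 3 = -Complex.I := by
    simp [pow_succ, Complex.I_sq]
  have hI4 : Complex.I ^ 4 = 1 := by
    simp [pow_succ, Complex.I_sq]
  have key1 : ∀ u v : ℂ, actGL2 m (fun u v => (u - Complex.I * v) ^ 3) u v
      = (w : ℂ) * ((Y : ℂ) ^ 3)⁻¹ * (u - ((x : ℂ) + Complex.I * (Y : ℂ) ^ 2) * v) ^ 3 := by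
    intro u v; rw [hact]; field_simp; try ring_nf; try simp only [hI4, hI3, Complex.I_sq]; try ring
  have key2 : ∀ u v : ℂ, actGL2 m (fun u v => (-v + Complex.I * u) ^ 3) u v
      = (w : ℂ) * ((Y : ℂ) ^ 3)⁻¹ * (-Complex.I)
        * (u - ((x : ℂ) - Complex.I * (Y : ℂ) ^ 2) * v) ^ 3 := by
    intro u v; rw [hact]; field_simp; try ring_nf; try simp only [hI4, hI3, Complex.I_sq]; try ring
  have key3 : ∀ u v : ℂ, actGL2 m (fun u v => (-v - Complex.I * u) ^ 3) u v
      = (w : ℂ) * ((Y : ℂ) ^ 3)⁻¹ * Complex.I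
        * (u - ((x : ℂ) + Complex.I * (Y : ℂ) ^ 2) * v) ^ 3 := by
    intro u v; rw [hact]; field_simp; try ring_nf; try simp only [hI4, hI3, Complex.I_sq]; try ring
  have key4 : ∀ u v : ℂ, actGL2 m
      (fun u v => 3 * (-v - Complex.I * u) ^ 2 * (-v + Complex.I * u)) u v
      = (w : ℂ) * ((Y : ℂ) ^ 3)⁻¹ * (-(3 * Complex.I))
        * (u - ((x : ℂ) + Complex.I * (Y : ℂ) ^ 2) * v) ^ 2
        * (u - ((x : ℂ) - Complex.I * (Y : ℂ) ^ 2) * v) := by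
    intro u v; rw [hact]; field_simp; try ring_nf; try simp only [hI4, hI3, Complex.I_sq]; try ring
  have key5 : ∀ u v : ℂ, actGL2 m
      (fun u v => 3 * (-v + Complex.I * u) ^ 2 * (-v - Complex.I * u)) u v
      = (w : ℂ) * ((Y : ℂ) ^ 3)⁻¹ * (3 * Complex.I)
        * (u - ((x : ℂ) - Complex.I * (Y : ℂ) ^ 2) * v) ^ 2
        * (u - ((x : ℂ) + Complex.I * (Y : ℂ) ^ 2) * v) := by
    intro u v; rw [hact]; field_simp; try ring_nf; try simp only [hI4, hI3, Complex.I_sq]; try ring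
  have hzY : z = (x : ℂ) + Complex.I * (Y : ℂ) ^ 2 := by rw [hz, hy2]
  have hzb : (starRingEnd ℂ) z = (x : ℂ) - Complex.I * (Y : ℂ) ^ 2 := by
    rw [hz, map_add, map_mul, Complex.conj_I, Complex.conj_ofReal, Complex.conj_ofReal, hy2]
    ring
  have hp' : ∀ t : ℂ, deriv p t = 3 * (a : ℂ) * t ^ 2 + 2 * (b : ℂ) * t + (c : ℂ) := by
    intro t
    have h1 := ((((hasDerivAt_pow 3 t).const_mul (a : ℂ)).add
      ((hasDerivAt_pow 2 t).const_mul (b : ℂ))).add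
      ((hasDerivAt_id' t).const_mul (c : ℂ))).add (hasDerivAt_const t (d : ℂ))
    rw [hp]; refine h1.deriv.trans ?_
    norm_num
    ring
  refine ⟨?_, ?_, ?_, ?_, ?_⟩
  · intro u v
    rw [key1 u v, hCK, hzY]
    try ring
  · intro q h
    have e0 := (h 1 0).trans (key2 1 0)
    have e1 := (h 1 1).trans (key2 1 1)
    have e2 := (h 1 (-1)).trans (key2 1 (-1))
    have e3 := (h 0 1).trans (key2 0 1)
    simp only [cubicEval] at e0 e1 e2 e3
    rw [hzb, hCK]
    simp only [cubicPair, hω, hp, Matrix.cons_val_zero, Matrix.cons_val_one, Matrix.head_cons,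
      Matrix.cons_val_two, Matrix.tail_cons, Matrix.cons_val_three]
    linear_combination ((d : ℂ) - b/3) * e0 + (((b : ℂ) - c)/6) * e1 + (((b : ℂ) + c)/6) * e2
      + ((c : ℂ)/3 - a) * e3
  · intro q h
    have e0 := (h 1 0).trans (key3 1 0)
    have e1 := (h 1 1).trans (key3 1 1)
    have e2 := (h 1 (-1)).trans (key3 1 (-1))
    have e3 := (h 0 1).trans (key3 0 1)
    simp only [cubicEval] at e0 e1 e2 e3
    rw [hzY, hCK]
    simp only [cubicPair, hω, hp, Matrix.cons_val_zero, Matrix.cons_val_one, Matrix.head_cons,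
      Matrix.cons_val_two, Matrix.tail_cons, Matrix.cons_val_three]
    linear_combination ((d : ℂ) - b/3) * e0 + (((b : ℂ) - c)/6) * e1 + (((b : ℂ) + c)/6) * e2
      + ((c : ℂ)/3 - a) * e3
  · intro q h
    have e0 := (h 1 0).trans (key4 1 0)
    have e1 := (h 1 1).trans (key4 1 1)
    have e2 := (h 1 (-1)).trans (key4 1 (-1))
    have e3 := (h 0 1).trans (key4 0 1)
    simp only [cubicEval] at e0 e1 e2 e3
    rw [hCK, hp' z, hzY, hy2]
    simp only [cubicPair, hω, hp, Matrix.cons_val_zero, Matrix.cons_val_one, Matrix.head_cons,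
      Matrix.cons_val_two, Matrix.tail_cons, Matrix.cons_val_three]
    linear_combination ((d : ℂ) - b/3) * e0 + (((b : ℂ) - c)/6) * e1 + (((b : ℂ) + c)/6) * e2
      + ((c : ℂ)/3 - a) * e3
      + 2*(w : ℂ)*((Y : ℂ)^3)⁻¹*(Y : ℂ)^2*(3*(a : ℂ)*((x : ℂ)+Complex.I*(Y : ℂ)^2)^2
        + 2*(b : ℂ)*((x : ℂ)+Complex.I*(Y : ℂ)^2) + (c : ℂ)) * Complex.I_sq
  · intro q h
    have e0 := (h 1 0).trans (key5 1 0)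
    have e1 := (h 1 1).trans (key5 1 1)
    have e2 := (h 1 (-1)).trans (key5 1 (-1))
    have e3 := (h 0 1).trans (key5 0 1)
    simp only [cubicEval] at e0 e1 e2 e3
    rw [hCK, hp' _, hzb, hy2]
    simp only [cubicPair, hω, hp, Matrix.cons_val_zero, Matrix.cons_val_one, Matrix.head_cons,
      Matrix.cons_val_two, Matrix.tail_cons, Matrix.cons_val_three]
    linear_combination ((d : ℂ) - b/3) * e0 + (((b : ℂ) - c)/6) * e1 + (((b : ℂ) + c)/6) * e2
      + ((c : ℂ)/3 - a) * e3
      + 2*(w : ℂ)*((Y : ℂ)^3)⁻¹*(Y : ℂ)^2*(3*(a : ℂ)*((x : ℂ)-Complex.I*(Y : ℂ)^2)^2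
        + 2*(b : ℂ)*((x : ℂ)-Complex.I*(Y : ℂ)^2) + (c : ℂ)) * Complex.I_sq


end
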